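/- Every essential ultrafilter on \mathbb{R}^n is an ultrafilter, i.e., a maximal element among all filters on \mathbb{R}^n. -/

import Mathlib

open MeasureTheory Filter

/-- A filter on `ℝⁿ` is *essential* if it contains no Lebesgue-null sets and is closed
under modification by null symmetric differences (w.r.t. outer Lebesgue measure). -/
def IsEssentialFilter {n : ℕ} (F : Filter (EuclideanSpace ℝ (Fin n))) : Prop :=
  (∀ A ∈ F, volume A ≠ 0) ∧
  ∀ A ∈ F, ∀ B : Set (EuclideanSpace ℝ (Fin n)), volume (symmDiff A B) = 0 → B ∈ F

/-- An *essential ultrafilter* is a maximal essential filter (maximal with respect to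
inclusion of filters, i.e. minimal in the filter order of Mathlib). -/
def IsEssentialUltrafilter {n : ℕ} (U : Filter (EuclideanSpace ℝ (Fin n))) : Prop :=
  IsEssentialFilter U ∧ ∀ F : Filter (EuclideanSpace ℝ (Fin n)),
    IsEssentialFilter F → F ≤ U → F = U

lemma mem_inf_principal_iff' {α : Type*} (f : Filter α) (A B : Set α) :
    B ∈ f ⊓ Filter.principal A ↔ ∃ S ∈ f, S ∩ A ⊆ B := by
  rw [Filter.mem_inf_principal]
  constructor
  · intro h
    exact ⟨_, h, fun x hx => hx.1 hx.2⟩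
  · rintro ⟨S, hS, hsub⟩
    exact Filter.mem_of_superset hS (fun x hx hxA => hsub ⟨hx, hxA⟩)

lemma large_mem {n : ℕ} (U : Filter (EuclideanSpace ℝ (Fin n)))
    (hU : IsEssentialUltrafilter U) (A : Set (EuclideanSpace ℝ (Fin n)))
    (hA : ∀ S ∈ U, volume (S ∩ A) ≠ 0) : A ∈ U := by
  obtain ⟨⟨hpos, hmod⟩, hmax⟩ := hU
  set F := U ⊓ Filter.principal A with hF
  have hFE : IsEssentialFilter F := by
    constructor
    · intro B hB
      rw [hF, mem_inf_principal_iff'] at hB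
      obtain ⟨S, hS, hsub⟩ := hB
      exact fun h0 => hA S hS (le_antisymm (h0 ▸ measure_mono hsub) (zero_le))
    · intro B hB C hBC
      rw [hF, mem_inf_principal_iff'] at hB ⊢
      obtain ⟨S, hS, hsub⟩ := hB
      set N := (S ∩ A) \ C with hN
      have hNnull : volume N = 0 := by
        have : N ⊆ symmDiff B C := fun x hx =>
          Or.inl ⟨hsub ⟨hx.1.1, hx.1.2⟩, hx.2⟩
        exact le_antisymm (hBC ▸ measure_mono this) (zero_le)
      have hS' : S \ N ∈ U := by
        apply hmod S hS
        have : symmDiff S (S \ N) ⊆ N := by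
          intro x hx
          rcases hx with hx | hx
          · exact not_not.mp (fun h => hx.2 ⟨hx.1, h⟩)
          · exact absurd hx.1.1 hx.2
        exact le_antisymm (hNnull ▸ measure_mono this) (zero_le)
      refine ⟨S \ N, hS', fun x hx => ?_⟩
      by_contra hxC
      exact hx.1.2 ⟨⟨hx.1.1, hx.2⟩, hxC⟩
  have hle : F ≤ U := inf_le_left
  have := hmax F hFE hle
  rw [← this, hF, mem_inf_principal_iff']
  exact ⟨Set.univ, Filter.univ_mem, fun x hx => hx.2⟩

theorem essentialUltrafilter_isUltrafilter {n : ℕ}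
    (U : Filter (EuclideanSpace ℝ (Fin n))) (hU : IsEssentialUltrafilter U) :
    ∃ V : Ultrafilter (EuclideanSpace ℝ (Fin n)), (V : Filter (EuclideanSpace ℝ (Fin n))) = U := by
  have hpos := hU.1.1
  have key : ∀ s : Set (EuclideanSpace ℝ (Fin n)), sᶜ ∉ U ↔ s ∈ U := by
    intro s
    constructor
    · intro hsc
      apply large_mem U hU
      intro S hS
      by_contra h0
      apply hsc
      apply large_mem U hU
      intro T hT
      intro h1
      have hST : S ∩ T ∈ U := Filter.inter_mem hS hT
      apply hpos (S ∩ T) hST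
      have hsub : S ∩ T ⊆ (S ∩ s) ∪ (T ∩ sᶜ) := by
        intro x hx
        by_cases hxs : x ∈ s
        · exact Or.inl ⟨hx.1, hxs⟩
        · exact Or.inr ⟨hx.2, hxs⟩
      refine le_antisymm ?_ (zero_le)
      calc volume (S ∩ T) ≤ volume ((S ∩ s) ∪ (T ∩ sᶜ)) := measure_mono hsub
        _ ≤ volume (S ∩ s) + volume (T ∩ sᶜ) := measure_union_le _ _
        _ = 0 := by rw [h0, h1, add_zero]
    · intro hs hsc
      have : (∅ : Set (EuclideanSpace ℝ (Fin n))) ∈ U := by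
        have := Filter.inter_mem hs hsc
        rwa [Set.inter_compl_self] at this
      exact hpos ∅ this (measure_empty)
  exact ⟨Ultrafilter.ofComplNotMemIff U key, rfl⟩
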